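/- Define g^m_{ℓ,n} = ∫_{−1}^{1} P_ℓ^m(x) P_n^m(x) / √(1 − x²) dx for integers m ≤ min{ℓ, n}. Then for all m, k ∈ ℕ: g^m_{m,m+2k} = g^m_{m+2k,m} = π · ((2m)!/4^{2m+2k}) · C(2k, k) · C(2m, m) · C(2m+2k, m+k), where C(a, b) denotes the binomial coefficient. -/

import Mathlib

open MeasureTheory

/-- The Legendre polynomial via the Rodrigues formula
`P_n(x) = (1/(2^n n!)) dⁿ/dxⁿ (x² − 1)ⁿ`. -/
noncomputable def legendreP (n : ℕ) (x : ℝ) : ℝ :=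
  (1 / ((2 : ℝ) ^ n * Nat.factorial n)) * iteratedDeriv n (fun y : ℝ => (y ^ 2 - 1) ^ n) x

/-- The associated Legendre function on `(−1,1)`:
`P_n^m(x) = (−1)^m (1 − x²)^{m/2} dᵐ/dxᵐ P_n(x)`. -/
noncomputable def assocLegendreP (n m : ℕ) (x : ℝ) : ℝ :=
  (-1 : ℝ) ^ m * (1 - x ^ 2) ^ ((m : ℝ) / 2) * iteratedDeriv m (legendreP n) x

/-- `g^m_{ℓ,n} = ∫_{−1}^{1} P_ℓ^m(x) P_n^m(x)/√(1 − x²) dx`. -/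
noncomputable def gInt (m l n : ℕ) : ℝ :=
  ∫ x in (-1 : ℝ)..1, assocLegendreP l m x * assocLegendreP n m x / Real.sqrt (1 - x ^ 2)

open Polynomial Finset

/-- Lpoly -/
noncomputable def Lpoly (n : ℕ) : Polynomial ℝ :=
  C (1 / ((2:ℝ)^n * Nat.factorial n)) * derivative^[n] ((X^2 - 1)^n)

lemma iteratedDeriv_polyeval (p : Polynomial ℝ) (k : ℕ) :
    iteratedDeriv k (fun x => p.eval x) = fun x => (derivative^[k] p).eval x := by
  induction k with
  | zero => simp
  | succ k ih =>
    rw [iteratedDeriv_succ, ih]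
    funext x
    rw [Function.iterate_succ_apply']
    exact Polynomial.deriv _

lemma legendreP_eq (n : ℕ) : legendreP n = fun x => (Lpoly n).eval x := by
  funext x
  have : (fun y : ℝ => (y ^ 2 - 1) ^ n) = fun y => ((X^2-1)^n : Polynomial ℝ).eval y := by
    funext y; simp
  rw [legendreP, this, iteratedDeriv_polyeval, Lpoly]
  simp [mul_comm]

lemma iteratedDeriv_legendreP (n m : ℕ) :
    iteratedDeriv m (legendreP n) = fun x =>
      (C (1 / ((2:ℝ)^n * Nat.factorial n)) * derivative^[n + m] ((X^2 - 1)^n)).eval x := by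
  rw [legendreP_eq, iteratedDeriv_polyeval, Lpoly, iterate_derivative_C_mul,
    ← Function.iterate_add_apply]
  rw [Nat.add_comm m n]

/-- expansion of the iterated derivative -/
lemma derivpow_eq (n r : ℕ) :
    derivative^[r] ((X^2 - 1 : Polynomial ℝ)^n)
      = ∑ j ∈ range (n+1),
          (((-1:ℝ))^(n-j) * (n.choose j) * ((2*j).descFactorial r)) • X^(2*j - r) := by
  have h : ((X^2 - 1 : Polynomial ℝ))^n = ∑ j ∈ range (n+1),
      (((-1:ℝ))^(n-j) * (n.choose j)) • X^(2*j) := by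
    have := add_pow (X^2 : Polynomial ℝ) (-1) n
    rw [show (X^2 + -1 : Polynomial ℝ) = X^2 - 1 by ring] at this
    rw [this]
    refine Finset.sum_congr rfl fun j hj => ?_
    rw [← pow_mul]
    simp [Algebra.smul_def, algebraMap]
    ring_nf
  rw [h, iterate_derivative_sum]
  refine Finset.sum_congr rfl fun j hj => ?_
  rw [iterate_derivative_smul, iterate_derivative_X_pow_eq_smul, smul_smul]


noncomputable def Kint (m e : ℕ) : ℝ :=
  ∫ x in (-1:ℝ)..1, x^e * (1-x^2)^m / Real.sqrt (1-x^2)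

lemma intInt_inv_sqrt : IntervalIntegrable (fun x : ℝ => 1 / Real.sqrt (1-x^2))
    volume (-1) 1 := by
  apply intervalIntegral.intervalIntegrable_deriv_of_nonneg (g := Real.arcsin)
  · exact Real.continuous_arcsin.continuousOn
  · intro x hx
    simp only [min_eq_left, max_eq_right, (by norm_num : (-1:ℝ) ≤ 1)] at hx
    exact Real.hasDerivAt_arcsin hx.1.ne' hx.2.ne
  · intro x hx; positivity

lemma Kintegrable (m e : ℕ) :
    IntervalIntegrable (fun x : ℝ => x^e * (1-x^2)^m / Real.sqrt (1-x^2)) volume (-1) 1 := by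
  have h : (fun x : ℝ => x^e * (1-x^2)^m / Real.sqrt (1-x^2))
      = fun x => (x^e * (1-x^2)^m) * (1 / Real.sqrt (1-x^2)) := by
    funext x; rw [mul_one_div]
  rw [h]
  exact intInt_inv_sqrt.continuousOn_mul (by fun_prop)

lemma hasDerivAt_sqrtpow (m : ℕ) (x : ℝ) (hx : x ∈ Set.Ioo (-1:ℝ) 1) :
    HasDerivAt (fun y : ℝ => (Real.sqrt (1-y^2))^(2*m+1))
      (-((2*m+1) * (x * (1-x^2)^m / Real.sqrt (1-x^2)))) x := by
  have hu : (0:ℝ) < 1 - x^2 := by nlinarith [hx.1, hx.2]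
  have h1 : HasDerivAt (fun y : ℝ => 1 - y^2) (-(2*x)) x := by
    simpa using ((hasDerivAt_pow 2 x).const_sub 1)
  have h2 : HasDerivAt (fun y : ℝ => Real.sqrt (1-y^2))
      (1 / (2 * Real.sqrt (1-x^2)) * -(2*x)) x :=
    (Real.hasDerivAt_sqrt hu.ne').comp x h1
  have h3 := h2.pow (2*m+1)
  refine h3.congr_deriv (Eq.symm ?_)
  have hs : Real.sqrt (1-x^2) ≠ 0 := by positivity
  have hpm : (1-x^2)^m = (Real.sqrt (1-x^2))^(2*m) := by
    rw [pow_mul, Real.sq_sqrt hu.le]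
  rw [hpm]
  simp only [Nat.add_sub_cancel]
  field_simp
  push_cast
  ring

lemma hasDerivAt_F (m b : ℕ) (x : ℝ) (hx : x ∈ Set.Ioo (-1:ℝ) 1) :
    HasDerivAt (fun y : ℝ => y^(b+1) * (Real.sqrt (1-y^2))^(2*m+1))
      (((b:ℝ)+1) * (x^b * (1-x^2)^m / Real.sqrt (1-x^2))
        - ((b:ℝ)+2*m+2) * (x^(b+2) * (1-x^2)^m / Real.sqrt (1-x^2))) x := by
  have hu : (0:ℝ) < 1 - x^2 := by nlinarith [hx.1, hx.2]
  have h := (hasDerivAt_pow (b+1) x).mul (hasDerivAt_sqrtpow m x hx)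
  refine h.congr_deriv (Eq.symm ?_)
  have hs : Real.sqrt (1-x^2) ≠ 0 := by positivity
  have hpm : (1-x^2)^m = (Real.sqrt (1-x^2))^(2*m) := by
    rw [pow_mul, Real.sq_sqrt hu.le]
  have hpm1 : (1-x^2)^(m+1) = (Real.sqrt (1-x^2))^(2*m+2) := by
    rw [show 2*m+2 = 2*(m+1) by ring, pow_mul, Real.sq_sqrt hu.le]
  have key : x^b * (1-x^2)^m / Real.sqrt (1-x^2) - x^(b+2) * (1-x^2)^m / Real.sqrt (1-x^2)
      = x^b * (1-x^2)^(m+1) / Real.sqrt (1-x^2) := by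
    rw [div_sub_div_same, ← sub_mul]
    ring_nf
  rw [hpm]
  simp only [Nat.add_sub_cancel]
  field_simp
  ring_nf
  rw [Real.sq_sqrt hu.le]
  push_cast
  ring

lemma K_step (m b : ℕ) : ((b:ℝ)+2*m+2) * Kint m (b+2) = ((b:ℝ)+1) * Kint m b := by
  have hle : (-1:ℝ) ≤ 1 := by norm_num
  have hFTC := intervalIntegral.integral_eq_sub_of_hasDeriv_right_of_le hle
    (f := fun y : ℝ => y^(b+1) * (Real.sqrt (1-y^2))^(2*m+1))
    (f' := fun x => ((b:ℝ)+1) * (x^b * (1-x^2)^m / Real.sqrt (1-x^2))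
        - ((b:ℝ)+2*m+2) * (x^(b+2) * (1-x^2)^m / Real.sqrt (1-x^2)))
    (by fun_prop)
    (fun x hx => (hasDerivAt_F m b x hx).hasDerivWithinAt)
    (((Kintegrable m b).const_mul _).sub ((Kintegrable m (b+2)).const_mul _))
  simp only [show (1:ℝ)-(1:ℝ)^2 = 0 by norm_num, show (1:ℝ)-(-1:ℝ)^2 = 0 by norm_num,
    Real.sqrt_zero, zero_pow (Nat.succ_ne_zero (2*m)), mul_zero] at hFTC
  rw [intervalIntegral.integral_sub ((Kintegrable m b).const_mul _)
    ((Kintegrable m (b+2)).const_mul _), intervalIntegral.integral_const_mul,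
    intervalIntegral.integral_const_mul] at hFTC
  rw [Kint, Kint]
  linarith [hFTC]

lemma K_one (m : ℕ) : Kint m 1 = 0 := by
  have hle : (-1:ℝ) ≤ 1 := by norm_num
  have hFTC := intervalIntegral.integral_eq_sub_of_hasDeriv_right_of_le hle
    (f := fun y : ℝ => (Real.sqrt (1-y^2))^(2*m+1))
    (f' := fun x => -((2*m+1 : ℝ) * (x * (1-x^2)^m / Real.sqrt (1-x^2))))
    (by fun_prop)
    (fun x hx => by
      have := hasDerivAt_sqrtpow m x hx
      convert this.hasDerivWithinAt using 2)
    (by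
      have := (Kintegrable m 1).const_mul (2*m+1 : ℝ)
      simpa [pow_one, Pi.neg_def] using this.neg)
  simp only [show (1:ℝ)-(1:ℝ)^2 = 0 by norm_num, show (1:ℝ)-(-1:ℝ)^2 = 0 by norm_num,
    Real.sqrt_zero, zero_pow (Nat.succ_ne_zero (2*m)), sub_zero] at hFTC
  have h2 : ∫ x in (-1:ℝ)..1, -((2*m+1 : ℝ) * (x * (1-x^2)^m / Real.sqrt (1-x^2)))
      = -((2*m+1:ℝ) * Kint m 1) := by
    rw [intervalIntegral.integral_neg, intervalIntegral.integral_const_mul]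
    simp [Kint]
  rw [h2] at hFTC
  have h3 : (2*(m:ℝ)+1) ≠ 0 := by positivity
  rw [hFTC] at h2
  have h4 : (2*(m:ℝ)+1) * Kint m 1 = 0 := by linarith [h2]
  exact (mul_eq_zero.mp h4).resolve_left h3

lemma K_zero_zero : Kint 0 0 = Real.pi := by
  have hle : (-1:ℝ) ≤ 1 := by norm_num
  have hFTC := intervalIntegral.integral_eq_sub_of_hasDeriv_right_of_le hle
    (f := Real.arcsin)
    (f' := fun x => x^0 * (1-x^2)^0 / Real.sqrt (1-x^2))
    Real.continuous_arcsin.continuousOn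
    (fun x hx => by
      have := Real.hasDerivAt_arcsin hx.1.ne' hx.2.ne
      simpa using this.hasDerivWithinAt)
    (Kintegrable 0 0)
  rw [Kint, hFTC, Real.arcsin_one, Real.arcsin_neg_one]
  ring

lemma K_zero (m : ℕ) :
    Kint m 0 = Real.pi * (Nat.factorial (2*m)) / (4^m * (Nat.factorial m) * (Nat.factorial m)) := by
  induction m with
  | zero => simpa using K_zero_zero
  | succ m ih =>
    have hsplit : Kint (m+1) 0 = Kint m 0 - Kint m 2 := by
      rw [Kint, Kint, Kint, ← intervalIntegral.integral_sub (Kintegrable m 0) (Kintegrable m 2)]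
      apply intervalIntegral.integral_congr
      intro x hx
      dsimp only
      rw [div_sub_div_same]
      congr 1
      ring
    have hstep := K_step m 0
    have hf : ((Nat.factorial (2*(m+1))) : ℝ)
        = (2*m+2)*(2*m+1)*((Nat.factorial (2*m)) : ℝ) := by
      rw [show 2*(m+1) = (2*m+1)+1 by ring, Nat.factorial_succ, Nat.factorial_succ]
      push_cast; ring
    have hfm : ((Nat.factorial (m+1)) : ℝ) = (m+1)*((Nat.factorial m) : ℝ) := by
      rw [Nat.factorial_succ]; push_cast; ring
    have hm : ((Nat.factorial m) : ℝ) ≠ 0 := by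
      exact_mod_cast (Nat.factorial_pos m).ne'
    have h4 : (4:ℝ)^m ≠ 0 := by positivity
    have h22 : (2*(m:ℝ)+2) ≠ 0 := by positivity
    push_cast at hstep
    have hK2 : Kint m 2 = Kint m 0 / (2*(m:ℝ)+2) := by
      field_simp
      linarith [hstep]
    rw [hsplit, hK2, ih, hf, hfm]
    push_cast
    rw [pow_succ]
    field_simp
    ring

lemma K_even (m i : ℕ) :
    Kint m (2*i) = Real.pi * (Nat.factorial (2*i)) * (Nat.factorial (2*m))
      / (4^(i+m) * (Nat.factorial i) * (Nat.factorial m) * (Nat.factorial (i+m))) := by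
  induction i with
  | zero => simpa using K_zero m
  | succ i ih =>
    have hstep := K_step m (2*i)
    have h1 : (2*(i:ℝ)+2*m+2) ≠ 0 := by positivity
    have key : Kint m (2*(i+1)) = (2*(i:ℝ)+1)/(2*(i:ℝ)+2*(m:ℝ)+2) * Kint m (2*i) := by
      rw [show 2*(i+1) = 2*i+2 by ring]
      push_cast at hstep
      field_simp
      linarith [hstep]
    rw [key, ih]
    have hf1 : ((Nat.factorial (2*(i+1))) : ℝ) = (2*i+2)*(2*i+1)*((Nat.factorial (2*i)) : ℝ) := by
      rw [show 2*(i+1) = (2*i+1)+1 by ring, Nat.factorial_succ, Nat.factorial_succ]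
      push_cast; ring
    have hf2 : ((Nat.factorial (i+1)) : ℝ) = (i+1)*((Nat.factorial i) : ℝ) := by
      rw [Nat.factorial_succ]; push_cast; ring
    have hf3 : ((Nat.factorial (i+1+m)) : ℝ) = (i+1+m)*((Nat.factorial (i+m)) : ℝ) := by
      rw [show i+1+m = (i+m)+1 by ring, Nat.factorial_succ]; push_cast; ring
    have h4 : (4:ℝ)^(i+m) ≠ 0 := by positivity
    have hm : ((Nat.factorial m) : ℝ) ≠ 0 := by exact_mod_cast (Nat.factorial_pos m).ne'
    have hi : ((Nat.factorial i) : ℝ) ≠ 0 := by exact_mod_cast (Nat.factorial_pos i).ne'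
    have him : ((Nat.factorial (i+m)) : ℝ) ≠ 0 := by exact_mod_cast (Nat.factorial_pos (i+m)).ne'
    have h2i : ((Nat.factorial (2*i)) : ℝ) ≠ 0 := by exact_mod_cast (Nat.factorial_pos (2*i)).ne'
    rw [hf1, hf2, hf3, show i+1+m = (i+m)+1 by ring]
    push_cast
    rw [pow_succ]
    field_simp
    ring

lemma K_odd (m i : ℕ) : Kint m (2*i+1) = 0 := by
  induction i with
  | zero => simpa using K_one m
  | succ i ih =>
    have hstep := K_step m (2*i+1)
    have h1 : (2*(i:ℝ)+1+2*m+2) ≠ 0 := by positivity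
    have : (2*(i:ℝ)+1+2*(m:ℝ)+2) * Kint m (2*(i+1)+1) = 0 := by
      push_cast at hstep
      rw [show 2*(i+1)+1 = 2*i+1+2 by ring]
      rw [ih] at hstep
      linarith [hstep]
    have h2 : (2*(i:ℝ)+1+2*(m:ℝ)+2) ≠ 0 := by positivity
    exact (mul_eq_zero.mp this).resolve_left h2


noncomputable def tA (m k i : ℕ) : ℝ :=
  (-1)^(k-i) * 4^(k-i) * (Nat.factorial (2*(m+k+i)))
    / (Nat.factorial i * Nat.factorial (m+i) * Nat.factorial (k-i) * Nat.factorial (m+k+i))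

noncomputable def gA (m k i : ℕ) : ℝ :=
  if i = 0 ∨ k+2 ≤ i then 0 else
  -(2*(m:ℝ)+4*k+3) * (-1)^(k+1-i) * 4^(k+1-i) * 2 * (Nat.factorial (2*(m+k+i)))
    / (Nat.factorial (i-1) * Nat.factorial (m+i-1) * Nat.factorial (k+1-i)
        * Nat.factorial (m+k+i))

lemma fne (n : ℕ) : ((Nat.factorial n : ℝ)) ≠ 0 := by
  exact_mod_cast (Nat.factorial_pos n).ne'

lemma fsucc (n : ℕ) : ((Nat.factorial (n+1) : ℝ)) = (n+1) * (Nat.factorial n : ℝ) := by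
  rw [Nat.factorial_succ]; push_cast; ring

lemma cert (m k i : ℕ) (hi : i ≤ k+1) :
    ((k:ℝ)+1)*((m:ℝ)+k+1) * tA m (k+1) i
      - 4*(2*(k:ℝ)+1)*(2*(m:ℝ)+2*k+1) * (if i ≤ k then tA m k i else 0)
    = gA m k (i+1) - gA m k i := by
  rcases Nat.eq_zero_or_pos i with rfl | hpos
  · -- i = 0 case
    rw [if_pos (Nat.zero_le k)]
    rw [tA, tA, gA, gA]
    rw [if_pos (Or.inl rfl), if_neg (show ¬((0+1 : ℕ) = 0 ∨ k+2 ≤ 0+1) by omega)]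
    simp only [Nat.sub_zero, Nat.add_zero]
    rw [show k+1-(0+1) = k by omega, show m+(0+1)-1 = m by omega,
      show (0+1:ℕ)-1 = 0 by omega,
      show 2*(m+k+(0+1)) = (2*(m+k)+1)+1 by omega,
      show m+k+(0+1) = (m+k)+1 by omega,
      show 2*(m+(k+1)) = (2*(m+k)+1)+1 by omega,
      show m+(k+1) = (m+k)+1 by omega]
    rw [fsucc (2*(m+k)+1), fsucc (2*(m+k)), fsucc (m+k), fsucc k]
    rw [pow_succ, pow_succ]
    have := fne k; have := fne (m+k); have := fne (2*(m+k)); have := fne m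
    have := fne (m+k+1)
    simp only [Nat.factorial_zero]
    field_simp
    push_cast
    ring
  · rcases Nat.lt_or_ge k i with hik | hik
    · -- i = k+1 case
      have hik1 : i = k+1 := by omega
      subst hik1
      rw [if_neg (by omega)]
      rw [tA, gA, gA]
      rw [if_pos (show (k+1+1 : ℕ) = 0 ∨ k+2 ≤ k+1+1 by omega),
        if_neg (show ¬((k+1 : ℕ) = 0 ∨ k+2 ≤ k+1) by omega)]
      rw [show (k+1:ℕ)-1 = k by omega, show m+(k+1)-1 = m+k by omega,
        show 2*(m+(k+1)+(k+1)) = ((2*(m+2*k+1))+1)+1 by omega,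
        show m+(k+1)+(k+1) = (m+2*k+1)+1 by omega,
        show 2*(m+k+(k+1)) = 2*(m+2*k+1) by omega,
        show m+k+(k+1) = m+2*k+1 by omega,
        show m+(k+1) = (m+k)+1 by omega]
      rw [fsucc (2*(m+2*k+1)+1), fsucc (2*(m+2*k+1)), fsucc (m+2*k+1),
        fsucc (m+k), fsucc k]
      have := fne k; have := fne (m+k); have := fne (m+2*k+1); have := fne (2*(m+2*k+1))
      norm_num
      field_simp
      push_cast
      ring
    · -- generic case 1 ≤ i ≤ k
      obtain ⟨j, rfl⟩ : ∃ j, i = j+1 := ⟨i-1, by omega⟩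
      obtain ⟨r, rfl⟩ : ∃ r, k = j+1+r := ⟨k-j-1, by omega⟩
      rw [if_pos (by omega)]
      rw [tA, tA, gA, gA]
      rw [if_neg (show ¬((j+1+1:ℕ) = 0 ∨ j+1+r+2 ≤ j+1+1) by omega),
        if_neg (show ¬((j+1:ℕ) = 0 ∨ j+1+r+2 ≤ j+1) by omega)]
      rw [show j+1+r+1-(j+1) = r+1 by omega, show j+1+r-(j+1) = r by omega,
        show j+1+r+1-(j+1+1) = r by omega,
        show (j+1+1:ℕ)-1 = j+1 by omega, show (j+1:ℕ)-1 = j by omega,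
        show m+(j+1+1)-1 = (m+j)+1 by omega, show m+(j+1)-1 = m+j by omega,
        show 2*(m+(j+1+r+1)+(j+1)) = ((2*(m+2*j+r+2))+1)+1 by omega,
        show 2*(m+(j+1+r)+(j+1+1)) = ((2*(m+2*j+r+2))+1)+1 by omega,
        show 2*(m+(j+1+r)+(j+1)) = 2*(m+2*j+r+2) by omega,
        show m+(j+1+r+1)+(j+1) = (m+2*j+r+2)+1 by omega,
        show m+(j+1+r)+(j+1+1) = (m+2*j+r+2)+1 by omega,
        show m+(j+1+r)+(j+1) = m+2*j+r+2 by omega,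
        show m+(j+1) = (m+j)+1 by omega]
      rw [fsucc (2*(m+2*j+r+2)+1), fsucc (2*(m+2*j+r+2)), fsucc (m+2*j+r+2),
        fsucc (m+j), fsucc j, fsucc r]
      rw [pow_succ, pow_succ]
      have := fne j; have := fne (m+j); have := fne r; have := fne (m+2*j+r+2)
      have := fne (2*(m+2*j+r+2))
      field_simp
      push_cast
      ring

lemma idKey_step (m k : ℕ) :
    ((k:ℝ)+1)*((m:ℝ)+k+1) * (∑ i ∈ range (k+1+1), tA m (k+1) i)
      = 4*(2*(k:ℝ)+1)*(2*(m:ℝ)+2*k+1) * (∑ i ∈ range (k+1), tA m k i) := by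
  have h1 : ∑ i ∈ range (k+2), (gA m k (i+1) - gA m k i) = gA m k (k+2) - gA m k 0 :=
    Finset.sum_range_sub _ _
  have h2 : gA m k (k+2) = 0 := by rw [gA, if_pos (Or.inr le_rfl)]
  have h3 : gA m k 0 = 0 := by rw [gA, if_pos (Or.inl rfl)]
  have h4 : ∑ i ∈ range (k+2), (((k:ℝ)+1)*((m:ℝ)+k+1) * tA m (k+1) i
      - 4*(2*(k:ℝ)+1)*(2*(m:ℝ)+2*k+1) * (if i ≤ k then tA m k i else 0)) = 0 := by
    rw [Finset.sum_congr rfl (fun i hi => cert m k i (by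
      simp only [Finset.mem_range] at hi; omega))]
    rw [h1, h2, h3, sub_zero]
  rw [Finset.sum_sub_distrib, ← Finset.mul_sum, ← Finset.mul_sum] at h4
  have h5 : ∑ i ∈ range (k+2), (if i ≤ k then tA m k i else 0)
      = ∑ i ∈ range (k+1), tA m k i := by
    rw [Finset.sum_range_succ, if_neg (by omega), add_zero]
    exact Finset.sum_congr rfl (fun i hi => if_pos (by
      simp only [Finset.mem_range] at hi; omega))
  rw [h5] at h4
  have : k+1+1 = k+2 := rfl
  rw [this]
  linarith

lemma idKey (m k : ℕ) :
    ∑ i ∈ range (k+1), tA m k i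
      = (Nat.choose (2*k) k : ℝ) * (Nat.choose (2*(m+k)) (m+k) : ℝ) := by
  induction k with
  | zero =>
    rw [Finset.sum_range_one, tA]
    simp only [Nat.sub_zero, Nat.add_zero, Nat.mul_zero, pow_zero, Nat.factorial_zero]
    rw [Nat.cast_choose ℝ (show m ≤ 2*m by omega), show 2*m - m = m by omega]
    norm_num
  | succ k ih =>
    have hstep := idKey_step m k
    rw [ih] at hstep
    have c1 := Nat.succ_mul_centralBinom_succ k
    have c2 := Nat.succ_mul_centralBinom_succ (m+k)
    unfold Nat.centralBinom at c1 c2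
    have hNat : (k+1)*(m+k+1) * (Nat.choose (2*(k+1)) (k+1) * Nat.choose (2*(m+(k+1))) (m+(k+1)))
        = (2*(2*k+1)) * (2*(2*(m+k)+1)) * (Nat.choose (2*k) k * Nat.choose (2*(m+k)) (m+k)) := by
      have e1 : (k+1)*(m+k+1) * (Nat.choose (2*(k+1)) (k+1) * Nat.choose (2*(m+(k+1))) (m+(k+1)))
          = ((k+1) * Nat.choose (2*(k+1)) (k+1)) * ((m+k+1) * Nat.choose (2*(m+k+1)) (m+k+1)) := by
        rw [show m+(k+1) = m+k+1 by omega]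
        ring
      rw [e1, c1, c2]
      ring
    have hcast := congrArg (fun n : ℕ => (n:ℝ)) hNat
    push_cast at hcast
    have hne : ((k:ℝ)+1)*((m:ℝ)+k+1) ≠ 0 := by positivity
    apply mul_left_cancel₀ hne
    rw [hstep]
    linear_combination -hcast

lemma iterDeriv_legendre' (n m : ℕ) :
    iteratedDeriv m (legendreP n) = fun x => (Polynomial.derivative^[m] (Lpoly n)).eval x := by
  rw [legendreP_eq, iteratedDeriv_polyeval]

lemma assoc_prod (l n m : ℕ) (x : ℝ) (hx : x ∈ Set.uIcc (-1:ℝ) 1) :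
    assocLegendreP l m x * assocLegendreP n m x / Real.sqrt (1-x^2)
      = ((Polynomial.derivative^[m] (Lpoly l)).eval x
          * (Polynomial.derivative^[m] (Lpoly n)).eval x)
        * ((1-x^2)^m / Real.sqrt (1-x^2)) := by
  have hx' : x ∈ Set.Icc (-1:ℝ) 1 := by
    rwa [Set.uIcc_of_le (by norm_num : (-1:ℝ) ≤ 1)] at hx
  have hu : (0:ℝ) ≤ 1 - x^2 := by nlinarith [hx'.1, hx'.2]
  have hP : (1-x^2) ^ ((m:ℝ)/2) * (1-x^2) ^ ((m:ℝ)/2) = (1-x^2)^m := by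
    rw [← sq, ← Real.rpow_natCast ((1-x^2) ^ ((m:ℝ)/2)) 2, ← Real.rpow_mul hu]
    rw [show (m:ℝ)/2*((2:ℕ):ℝ) = (m:ℝ) by push_cast; ring, Real.rpow_natCast]
  have hsign : ((-1:ℝ))^m * ((-1:ℝ))^m = 1 := by
    rw [← pow_add]; exact Even.neg_one_pow ⟨m, by ring⟩
  rw [assocLegendreP, assocLegendreP, iterDeriv_legendre', iterDeriv_legendre']
  have key : ((-1:ℝ))^m * (1-x^2) ^ ((m:ℝ)/2) * ((Polynomial.derivative^[m] (Lpoly l)).eval x)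
      * ((-1:ℝ)^m * (1-x^2) ^ ((m:ℝ)/2) * ((Polynomial.derivative^[m] (Lpoly n)).eval x))
      = ((Polynomial.derivative^[m] (Lpoly l)).eval x
          * (Polynomial.derivative^[m] (Lpoly n)).eval x) * (1-x^2)^m := by
    calc ((-1:ℝ))^m * (1-x^2) ^ ((m:ℝ)/2) * ((Polynomial.derivative^[m] (Lpoly l)).eval x)
        * ((-1:ℝ)^m * (1-x^2) ^ ((m:ℝ)/2) * ((Polynomial.derivative^[m] (Lpoly n)).eval x))
        = (((-1:ℝ))^m * (-1:ℝ)^m) * ((1-x^2) ^ ((m:ℝ)/2) * (1-x^2) ^ ((m:ℝ)/2))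
          * (((Polynomial.derivative^[m] (Lpoly l)).eval x)
            * ((Polynomial.derivative^[m] (Lpoly n)).eval x)) := by ring
      _ = _ := by rw [hsign, hP]; ring
  rw [key, mul_div_assoc]

lemma gInt_eq (l n m : ℕ) : gInt m l n = ∫ x in (-1:ℝ)..1,
    ((Polynomial.derivative^[m] (Lpoly l)).eval x
        * (Polynomial.derivative^[m] (Lpoly n)).eval x)
      * ((1-x^2)^m / Real.sqrt (1-x^2)) := by
  rw [gInt]
  exact intervalIntegral.integral_congr (fun x hx => assoc_prod l n m x hx)

lemma gInt_comm (m l n : ℕ) : gInt m l n = gInt m n l := by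
  unfold gInt
  congr 1
  funext x
  ring

lemma eval_Dpoly (n r : ℕ) (x : ℝ) :
    (Polynomial.derivative^[r] (Lpoly n)).eval x
      = (1/((2:ℝ)^n * Nat.factorial n)) * ∑ j ∈ range (n+1),
          ((-1:ℝ))^(n-j) * (n.choose j) * ((2*j).descFactorial (n+r)) * x^(2*j - (n+r)) := by
  rw [Lpoly, Polynomial.iterate_derivative_C_mul, ← Function.iterate_add_apply,
    show r + n = n + r by omega, derivpow_eq]
  rw [Polynomial.eval_mul, Polynomial.eval_C, Polynomial.eval_finset_sum]
  congr 1
  refine Finset.sum_congr rfl fun j hj => ?_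
  rw [Polynomial.eval_smul, smul_eq_mul, Polynomial.eval_pow, Polynomial.eval_X]

lemma eval_Dself (m : ℕ) (x : ℝ) :
    (Polynomial.derivative^[m] (Lpoly m)).eval x
      = ((2*m).factorial : ℝ) / (2^m * Nat.factorial m) := by
  rw [eval_Dpoly m m x, Finset.sum_range_succ]
  have h0 : ∀ j ∈ range m,
      ((-1:ℝ))^(m-j) * (m.choose j) * ((2*j).descFactorial (m+m)) * x^(2*j-(m+m)) = 0 := by
    intro j hj
    simp only [Finset.mem_range] at hj
    have : (2*j).descFactorial (m+m) = 0 := Nat.descFactorial_eq_zero_iff_lt.mpr (by omega)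
    rw [this]
    push_cast
    ring
  rw [Finset.sum_eq_zero h0, zero_add, Nat.sub_self, show 2*m - (m+m) = 0 by omega,
    show (2*m).descFactorial (m+m) = (2*m).factorial by
      rw [show m+m = 2*m by omega]; exact Nat.descFactorial_self _,
    Nat.choose_self]
  push_cast
  ring

lemma Kint_def (m e : ℕ) :
    (∫ x in (-1:ℝ)..1, x^e * (1-x^2)^m / Real.sqrt (1-x^2)) = Kint m e := rfl

lemma gInt_main (m k : ℕ) :
    gInt m m (m + 2*k)
      = Real.pi * (Nat.factorial (2*m) : ℝ) / 4 ^ (2*m+2*k) *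
          (Nat.choose (2*k) k : ℝ) * (Nat.choose (2*m) m : ℝ) *
          (Nat.choose (2*m+2*k) (m+k) : ℝ) := by
  rw [gInt_eq]
  have hfun : ∀ x : ℝ,
      ((Polynomial.derivative^[m] (Lpoly m)).eval x
        * (Polynomial.derivative^[m] (Lpoly (m+2*k))).eval x)
        * ((1-x^2)^m / Real.sqrt (1-x^2))
      = ∑ j ∈ range (m+2*k+1),
          (((2*m).factorial : ℝ)/(2^m * Nat.factorial m)
            * (1/((2:ℝ)^(m+2*k) * Nat.factorial (m+2*k)))
            * ((-1:ℝ))^(m+2*k-j) * ((m+2*k).choose j)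
            * ((2*j).descFactorial (m+2*k+m)))
            * (x^(2*j - (m+2*k+m)) * (1-x^2)^m / Real.sqrt (1-x^2)) := by
    intro x
    rw [eval_Dself m x, eval_Dpoly (m+2*k) m x, Finset.mul_sum, Finset.mul_sum,
      Finset.sum_mul]
    refine Finset.sum_congr rfl fun j hj => ?_
    ring
  simp only [hfun]
  rw [intervalIntegral.integral_finset_sum
    (fun j hj => ((Kintegrable m (2*j-(m+2*k+m))).const_mul _))]
  simp_rw [intervalIntegral.integral_const_mul, Kint_def]
  have hzero : ∀ j ∈ Finset.Ico 0 (m+k),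
      (((2*m).factorial : ℝ)/(2^m * Nat.factorial m)
        * (1/((2:ℝ)^(m+2*k) * Nat.factorial (m+2*k)))
        * ((-1:ℝ))^(m+2*k-j) * ((m+2*k).choose j)
        * ((2*j).descFactorial (m+2*k+m))) * Kint m (2*j - (m+2*k+m)) = 0 := by
    intro j hj
    simp only [Finset.mem_Ico] at hj
    have : (2*j).descFactorial (m+2*k+m) = 0 :=
      Nat.descFactorial_eq_zero_iff_lt.mpr (by omega)
    rw [this]
    push_cast
    ring
  rw [Finset.range_eq_Ico,
    ← Finset.sum_Ico_consecutive _ (Nat.zero_le (m+k)) (show m+k ≤ m+2*k+1 by omega),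
    Finset.sum_eq_zero hzero, zero_add, Finset.sum_Ico_eq_sum_range,
    show m+2*k+1-(m+k) = k+1 by omega]
  have hterm : ∀ i ∈ range (k+1),
      (((2*m).factorial : ℝ)/(2^m * Nat.factorial m)
        * (1/((2:ℝ)^(m+2*k) * Nat.factorial (m+2*k)))
        * ((-1:ℝ))^(m+2*k-(m+k+i)) * ((m+2*k).choose (m+k+i))
        * ((2*(m+k+i)).descFactorial (m+2*k+m))) * Kint m (2*(m+k+i) - (m+2*k+m))
      = (Real.pi * ((2*m).factorial : ℝ) * ((2*m).factorial : ℝ)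
          / (2^m * (Nat.factorial m : ℝ) * 2^(m+2*k) * 4^(k+m) * (Nat.factorial m : ℝ)))
        * tA m k i := by
    intro i hi
    simp only [Finset.mem_range] at hi
    have hik : i ≤ k := by omega
    rw [tA, show m+2*k-(m+k+i) = k-i by omega,
      show 2*(m+k+i) - (m+2*k+m) = 2*i by omega, K_even m i]
    have hdf : (((2*(m+k+i)).descFactorial (m+2*k+m)) : ℝ)
        = ((2*(m+k+i)).factorial : ℝ) / ((2*i).factorial : ℝ) := by
      have h := Nat.factorial_mul_descFactorial (show m+2*k+m ≤ 2*(m+k+i) by omega)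
      rw [show 2*(m+k+i) - (m+2*k+m) = 2*i by omega] at h
      rw [eq_div_iff (fne (2*i))]
      exact_mod_cast (by rw [mul_comm]; exact h :
        (2*(m+k+i)).descFactorial (m+2*k+m) * (2*i).factorial = (2*(m+k+i)).factorial)
    rw [hdf, Nat.cast_choose ℝ (show m+k+i ≤ m+2*k by omega),
      show m+2*k - (m+k+i) = k-i by omega,
      show (4:ℝ)^(k+m) = 4^(i+m) * 4^(k-i) by rw [← pow_add]; congr 1; omega]
    have := fne (2*i); have := fne (2*m); have := fne i; have := fne m
    have := fne (i+m); have := fne (m+k+i); have := fne (k-i); have := fne (m+2*k)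
    have := fne (2*(m+k+i))
    have h4a : ((4:ℝ))^(i+m) ≠ 0 := by positivity
    have h4b : ((4:ℝ))^(k-i) ≠ 0 := by positivity
    have h2a : ((2:ℝ))^m ≠ 0 := by positivity
    have h2b : ((2:ℝ))^(m+2*k) ≠ 0 := by positivity
    field_simp
    ring
  rw [Finset.sum_congr rfl hterm, ← Finset.mul_sum, idKey,
    show 2*(m+k) = 2*m+2*k by ring]
  have hpow : (4:ℝ)^(2*m+2*k) = 2^m * 2^(m+2*k) * 4^(k+m) := by
    rw [show (4:ℝ) = 2^2 by norm_num, ← pow_mul, ← pow_mul, ← pow_add, ← pow_add]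
    congr 1
    omega
  rw [Nat.cast_choose ℝ (show m ≤ 2*m by omega), show 2*m-m = m by omega, hpow]
  have := fne m; have := fne (2*m)
  have h4c : ((4:ℝ))^(k+m) ≠ 0 := by positivity
  have h2a : ((2:ℝ))^m ≠ 0 := by positivity
  have h2b : ((2:ℝ))^(m+2*k) ≠ 0 := by positivity
  field_simp

/-- For all `m, k ∈ ℕ`:
`g^m_{m,m+2k} = g^m_{m+2k,m} = π ((2m)!/4^{2m+2k}) C(2k,k) C(2m,m) C(2m+2k,m+k)`. -/
theorem gInt_first_row (m k : ℕ) :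
    gInt m m (m + 2 * k)
        = Real.pi * (Nat.factorial (2 * m) : ℝ) / 4 ^ (2 * m + 2 * k) *
            (Nat.choose (2 * k) k : ℝ) * (Nat.choose (2 * m) m : ℝ) *
            (Nat.choose (2 * m + 2 * k) (m + k) : ℝ) ∧
    gInt m (m + 2 * k) m
        = Real.pi * (Nat.factorial (2 * m) : ℝ) / 4 ^ (2 * m + 2 * k) *
            (Nat.choose (2 * k) k : ℝ) * (Nat.choose (2 * m) m : ℝ) *
            (Nat.choose (2 * m + 2 * k) (m + k) : ℝ) :=
  ⟨gInt_main m k, by rw [gInt_comm]; exact gInt_main m k⟩
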